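/- Classical two-universal hashing extraction bound for sub-normalized inputs (leftover hash lemma form used in the paper): let P̃_{XY} be a sub-normalized distribution on finite X × Y with P̃_{XY}(x,y) ≤ 2^{−k} P_Y(y) for all (x,y) (where P_Y is a fixed distribution on Y), and let {f^s : X → Z}_{s∈S} be a two-universal family of hash functions. Then T( (1/|S|)∑_s δ_s ⊗ Q̃^s_{ZY}, U_S × U_Z × P̃_Y ) ≤ (1/2)·√(|Z|·2^{−k}) where Q̃^s_{ZY}(z,y) := ∑_{x: f^s(x)=z} P̃_{XY}(x,y). -/

import Mathlib

open scoped BigOperators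
open Classical Real

noncomputable def Tv {α : Type*} [Fintype α] (P Q : α → ℝ) : ℝ :=
  (1/2) * ∑ x, |P x - Q x| + (1/2) * |∑ x, P x - ∑ x, Q x|

noncomputable def Dmax {α : Type*} [Fintype α] (P R : α → ℝ) : ℝ :=
  Real.logb 2 (sInf {l : ℝ | ∀ x, P x ≤ l * R x})

noncomputable def Ds {α : Type*} [Fintype α] (ε : ℝ) (P R : α → ℝ) : ℝ :=
  sInf {a : ℝ | (∑ x, if (2:ℝ) ^ a * R x < P x then P x else 0) < ε}

lemma key_alg {X Z S : Type*} [Fintype X] [Fintype Z] [Fintype S]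
    (f : S → X → Z) (g : X → ℝ) (hg : ∀ x, 0 ≤ g x)
    (hZ : (0:ℝ) < (Fintype.card Z : ℝ)) (hS : (0:ℝ) < (Fintype.card S : ℝ))
    (huniv : ∀ x x', x ≠ x' →
      (∑ s, if f s x = f s x' then (1:ℝ) else 0)
        ≤ (Fintype.card S : ℝ) / (Fintype.card Z : ℝ)) :
    (∑ s, ∑ z, ((∑ x, if f s x = z then g x else 0)
        - (∑ x, g x) / (Fintype.card Z : ℝ)) ^ 2)
      ≤ (Fintype.card S : ℝ) * ∑ x, (g x) ^ 2 := by
  set nZ : ℝ := (Fintype.card Z : ℝ)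
  set nS : ℝ := (Fintype.card S : ℝ)
  set B : ℝ := ∑ x, g x with hB
  have hsumA : ∀ s, ∑ z, (∑ x, if f s x = z then g x else 0) = B := by
    intro s
    rw [Finset.sum_comm]
    simp [Finset.sum_ite_eq]
    exact hB.symm
  have hexp : ∀ s, ∑ z, ((∑ x, if f s x = z then g x else 0) - B / nZ) ^ 2
      = (∑ z, (∑ x, if f s x = z then g x else 0) ^ 2) - B ^ 2 / nZ := by
    intro s
    have : ∀ z, ((∑ x, if f s x = z then g x else 0) - B / nZ) ^ 2
        = (∑ x, if f s x = z then g x else 0) ^ 2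
          - 2 * (B / nZ) * (∑ x, if f s x = z then g x else 0) + (B / nZ)^2 := by
      intro z; ring
    rw [Finset.sum_congr rfl fun z _ => this z]
    rw [Finset.sum_add_distrib, Finset.sum_sub_distrib, ← Finset.mul_sum, hsumA,
      Finset.sum_const, Finset.card_univ, nsmul_eq_mul]
    field_simp
    ring
  have hA2 : ∀ s, ∑ z, (∑ x, if f s x = z then g x else 0) ^ 2
      = ∑ x, ∑ x', (if f s x = f s x' then g x * g x' else 0) := by
    intro s
    have h1 : ∀ z, (∑ x, if f s x = z then g x else 0) ^ 2
        = ∑ x, ∑ x', (if f s x = z ∧ f s x' = z then g x * g x' else 0) := by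
      intro z
      rw [sq, Finset.sum_mul_sum]
      congr 1; ext x; congr 1; ext x'
      split_ifs <;> simp_all
    rw [Finset.sum_congr rfl fun z _ => h1 z]
    rw [Finset.sum_comm]
    congr 1; ext x
    rw [Finset.sum_comm]
    congr 1; ext x'
    by_cases h : f s x = f s x'
    · rw [h]
      simp [Finset.sum_ite_eq]
    · rw [if_neg h, Finset.sum_eq_zero]
      intro z _
      rw [if_neg]
      rintro ⟨h1, h2⟩
      exact h (h1.trans h2.symm)
  have step : (∑ s, ∑ z, ((∑ x, if f s x = z then g x else 0) - B / nZ) ^ 2)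
      = (∑ x, ∑ x', (g x * g x') * (∑ s, if f s x = f s x' then (1:ℝ) else 0))
        - nS * (B ^ 2 / nZ) := by
    rw [Finset.sum_congr rfl fun s _ => (hexp s).trans (by rw [hA2 s]),
      Finset.sum_sub_distrib, Finset.sum_const, Finset.card_univ, nsmul_eq_mul]
    congr 1
    rw [Finset.sum_comm]
    congr 1; ext x
    rw [Finset.sum_comm]
    congr 1; ext x'
    rw [Finset.mul_sum]
    congr 1; ext s
    split_ifs <;> ring
  rw [step]
  have hbnd : (∑ x, ∑ x', (g x * g x') * (∑ s, if f s x = f s x' then (1:ℝ) else 0))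
      ≤ ∑ x, ∑ x', (g x * g x') * (if x = x' then nS else nS / nZ) := by
    apply Finset.sum_le_sum; intro x _
    apply Finset.sum_le_sum; intro x' _
    apply mul_le_mul_of_nonneg_left _ (mul_nonneg (hg x) (hg x'))
    by_cases h : x = x'
    · subst h
      simp [Finset.sum_const, Finset.card_univ, nS]
    · rw [if_neg h]; exact huniv x x' h
  have heval : (∑ x, ∑ x', (g x * g x') * (if x = x' then nS else nS / nZ))
      = (nS / nZ) * B ^ 2 + (nS - nS / nZ) * ∑ x, (g x) ^ 2 := by
    have : ∀ x x', (g x * g x') * (if x = x' then nS else nS / nZ)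
        = (g x * g x') * (nS / nZ) + (if x = x' then (g x * g x') * (nS - nS/nZ) else 0) := by
      intro x x'; split_ifs <;> ring
    simp_rw [this, Finset.sum_add_distrib]
    congr 1
    · rw [show (nS / nZ) * B ^ 2 = (∑ x, ∑ x', g x * g x') * (nS / nZ) by
          rw [← Finset.sum_mul_sum]; rw [hB]; ring]
      rw [Finset.sum_mul]
      congr 1; ext x
      rw [Finset.sum_mul]
    · rw [Finset.sum_congr rfl (fun x _ => Finset.sum_ite_eq Finset.univ x
        (fun x' => (g x * g x') * (nS - nS/nZ)))]
      simp only [Finset.mem_univ, if_true]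
      rw [Finset.mul_sum]
      congr 1; ext x; ring
  have hgB : 0 ≤ ∑ x, (g x)^2 := Finset.sum_nonneg fun x _ => sq_nonneg _
  calc _ ≤ (nS / nZ) * B ^ 2 + (nS - nS / nZ) * ∑ x, (g x) ^ 2 - nS * (B ^ 2 / nZ) := by
        rw [← heval]; linarith [hbnd]
    _ = nS * ∑ x, (g x)^2 - (nS/nZ) * ∑ x, (g x)^2 := by ring
    _ ≤ nS * ∑ x, (g x)^2 := by
        have : 0 ≤ (nS/nZ) * ∑ x, (g x)^2 := mul_nonneg (by positivity) hgB
        linarith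

theorem stmt18 {X Y Z S : Type*} [Fintype X] [Fintype Y] [Fintype Z] [Fintype S]
    [Nonempty S] [Nonempty Z]
    (f : S → X → Z) (Pt : X × Y → ℝ) (PY : Y → ℝ) (k : ℝ)
    (huniv : ∀ x x', x ≠ x' →
      (∑ s, if f s x = f s x' then (1:ℝ) else 0) / (Fintype.card S : ℝ)
        ≤ 1 / (Fintype.card Z : ℝ))
    (hPt : ∀ p, 0 ≤ Pt p) (hPt1 : ∑ p, Pt p ≤ 1)
    (hPY : ∀ y, 0 ≤ PY y) (hPY1 : ∑ y, PY y = 1)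
    (hmarg : ∀ y, ∑ x, Pt (x, y) ≤ PY y)
    (hbound : ∀ p : X × Y, Pt p ≤ (2:ℝ) ^ (-k) * PY p.2) :
    Tv (fun q : S × Z × Y =>
          (1 / (Fintype.card S : ℝ)) * ∑ x, if f q.1 x = q.2.1 then Pt (x, q.2.2) else 0)
       (fun q : S × Z × Y =>
          (1 / (Fintype.card S : ℝ)) * (1 / (Fintype.card Z : ℝ)) * (∑ x, Pt (x, q.2.2)))
      ≤ (1/2) * Real.sqrt ((Fintype.card Z : ℝ) * (2:ℝ) ^ (-k)) := by
  classical
  have hSpos : (0:ℝ) < (Fintype.card S : ℝ) := by exact_mod_cast Fintype.card_pos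
  have hZpos : (0:ℝ) < (Fintype.card Z : ℝ) := by exact_mod_cast Fintype.card_pos
  set nS : ℝ := (Fintype.card S : ℝ) with hnS
  set nZ : ℝ := (Fintype.card Z : ℝ) with hnZ
  have hSne : nS ≠ 0 := ne_of_gt hSpos
  have hZne : nZ ≠ 0 := ne_of_gt hZpos
  have hk : (0:ℝ) < (2:ℝ) ^ (-k) := by positivity
  set P : S × Z × Y → ℝ := fun q =>
    (1 / nS) * ∑ x, if f q.1 x = q.2.1 then Pt (x, q.2.2) else 0 with hPdef
  set Q : S × Z × Y → ℝ := fun q =>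
    (1 / nS) * (1 / nZ) * (∑ x, Pt (x, q.2.2)) with hQdef
  have huniv' : ∀ x x', x ≠ x' →
      (∑ s, if f s x = f s x' then (1:ℝ) else 0) ≤ nS / nZ := by
    intro x x' hxx
    have h1 := huniv x x' hxx
    rw [div_le_div_iff₀ hSpos hZpos] at h1
    rw [le_div_iff₀ hZpos]
    linarith
  have hPt0 : ∀ (x : X) (y : Y), PY y = 0 → Pt (x, y) = 0 := by
    intro x y hy
    have h1 := hbound (x, y)
    simp only [hy, mul_zero] at h1
    exact le_antisymm h1 (hPt (x, y))
  -- total sums agree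
  have hchan : ∀ (s : S) (y : Y),
      (∑ z, ∑ x, if f s x = z then Pt (x, y) else 0) = ∑ x, Pt (x, y) := by
    intro s y
    rw [Finset.sum_comm]
    simp [Finset.sum_ite_eq]
  have hsumP : ∑ q : S × Z × Y, P q = ∑ y, ∑ x, Pt (x, y) := by
    rw [Fintype.sum_prod_type]
    have hs : ∀ s : S, (∑ zy : Z × Y, P (s, zy)) = (1/nS) * ∑ y, ∑ x, Pt (x, y) := by
      intro s
      rw [Fintype.sum_prod_type]
      simp only [hPdef]
      rw [Finset.sum_comm]
      simp_rw [← Finset.mul_sum]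
      congr 1
      refine Finset.sum_congr rfl fun y _ => ?_
      exact hchan s y
    rw [Finset.sum_congr rfl fun s _ => hs s, Finset.sum_const, Finset.card_univ,
      nsmul_eq_mul, ← hnS]
    field_simp
  have hsumQ : ∑ q : S × Z × Y, Q q = ∑ y, ∑ x, Pt (x, y) := by
    simp only [hQdef]
    rw [Fintype.sum_prod_type]
    simp_rw [Fintype.sum_prod_type, ← Finset.mul_sum, Finset.sum_const, Finset.card_univ,
      nsmul_eq_mul]
    rw [← hnS, ← hnZ]
    field_simp
  -- the weight function and the auxiliary function
  set w : S × Z × Y → ℝ := fun q => PY q.2.2 / (nS * nZ) with hw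
  have hwnn : ∀ q, 0 ≤ w q := by
    intro q
    exact div_nonneg (hPY _) (le_of_lt (mul_pos hSpos hZpos))
  set hv : S × Z × Y → ℝ := fun q =>
    if PY q.2.2 = 0 then 0 else |P q - Q q| / Real.sqrt (w q) with hh
  have hPQ0 : ∀ q : S × Z × Y, PY q.2.2 = 0 → P q = Q q := by
    intro q hq
    have h0 : ∀ x, Pt (x, q.2.2) = 0 := fun x => hPt0 x _ hq
    simp [hPdef, hQdef, h0]
  have hfact : ∀ q, |P q - Q q| = Real.sqrt (w q) * hv q := by
    intro q
    by_cases hq : PY q.2.2 = 0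
    · simp [hh, hq, hPQ0 q hq]
    · have hwpos : 0 < w q :=
        div_pos (lt_of_le_of_ne (hPY _) (Ne.symm hq)) (mul_pos hSpos hZpos)
      simp only [hh, if_neg hq]
      rw [mul_comm, div_mul_cancel₀ _ (ne_of_gt (Real.sqrt_pos.2 hwpos))]
  have hCS : (∑ q, |P q - Q q|)^2 ≤ (∑ q, w q) * (∑ q, (hv q)^2) := by
    calc (∑ q, |P q - Q q|)^2 = (∑ q, Real.sqrt (w q) * hv q)^2 := by
          rw [Finset.sum_congr rfl fun q _ => hfact q]
      _ ≤ (∑ q, Real.sqrt (w q)^2) * (∑ q, (hv q)^2) :=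
          Finset.sum_mul_sq_le_sq_mul_sq _ _ _
      _ = (∑ q, w q) * (∑ q, (hv q)^2) := by
          congr 1
          exact Finset.sum_congr rfl fun q _ => Real.sq_sqrt (hwnn q)
  have hw1 : ∑ q : S × Z × Y, w q = 1 := by
    simp only [hw]
    rw [Fintype.sum_prod_type]
    simp_rw [Fintype.sum_prod_type, ← Finset.sum_div, hPY1, Finset.sum_const,
      Finset.card_univ, nsmul_eq_mul]
    rw [← hnS, ← hnZ]
    field_simp
  have hhsq : ∀ q, (hv q)^2 = if PY q.2.2 = 0 then 0 else (P q - Q q)^2 / w q := by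
    intro q
    by_cases hq : PY q.2.2 = 0
    · simp [hh, hq]
    · simp only [hh, if_neg hq]
      rw [div_pow, sq_abs, Real.sq_sqrt (hwnn q)]
  -- per-y bound
  have hy : ∀ y : Y, (∑ s, ∑ z, (hv (s, z, y))^2) ≤ nZ * (2:ℝ)^(-k) * ∑ x, Pt (x, y) := by
    intro y
    by_cases hq : PY y = 0
    · have : ∀ (s : S) (z : Z), hv (s, z, y) = 0 := by
        intro s z; simp [hh, hq]
      simp only [this, ne_eq, OfNat.ofNat_ne_zero, not_false_eq_true, zero_pow,
        Finset.sum_const_zero]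
      exact mul_nonneg (by positivity) (Finset.sum_nonneg fun x _ => hPt (x, y))
    · have hpy : 0 < PY y := lt_of_le_of_ne (hPY y) (Ne.symm hq)
      have hterm : ∀ (s : S) (z : Z), (hv (s, z, y))^2
          = (nZ / (nS * PY y)) *
            ((∑ x, if f s x = z then Pt (x, y) else 0) - (∑ x, Pt (x, y)) / nZ)^2 := by
        intro s z
        rw [hhsq (s, z, y)]
        simp only [if_neg hq]
        simp only [hPdef, hQdef, hw]
        field_simp
      have hK := key_alg f (fun x => Pt (x, y)) (fun x => hPt (x, y)) hZpos hSpos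
        (fun x x' hxx => huniv' x x' hxx)
      calc (∑ s, ∑ z, (hv (s, z, y))^2)
          = (nZ / (nS * PY y)) * ∑ s, ∑ z,
              ((∑ x, if f s x = z then Pt (x, y) else 0) - (∑ x, Pt (x, y)) / nZ)^2 := by
            simp_rw [hterm, ← Finset.mul_sum]
        _ ≤ (nZ / (nS * PY y)) * (nS * ∑ x, (Pt (x, y))^2) := by
            apply mul_le_mul_of_nonneg_left hK
            exact le_of_lt (div_pos hZpos (mul_pos hSpos hpy))
        _ = (nZ / PY y) * ∑ x, (Pt (x, y))^2 := by
            field_simp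
        _ ≤ (nZ / PY y) * ((2:ℝ)^(-k) * PY y * ∑ x, Pt (x, y)) := by
            apply mul_le_mul_of_nonneg_left _ (le_of_lt (div_pos hZpos hpy))
            calc ∑ x, (Pt (x, y))^2
                ≤ ∑ x, ((2:ℝ)^(-k) * PY y) * Pt (x, y) := by
                  refine Finset.sum_le_sum fun x _ => ?_
                  rw [sq]
                  exact mul_le_mul_of_nonneg_right (hbound (x, y)) (hPt (x, y))
              _ = (2:ℝ)^(-k) * PY y * ∑ x, Pt (x, y) := by rw [Finset.mul_sum]
        _ = nZ * (2:ℝ)^(-k) * ∑ x, Pt (x, y) := by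
            field_simp
  -- sum over y
  have hmargsum : ∑ y, ∑ x, Pt (x, y) ≤ 1 := by
    calc ∑ y, ∑ x, Pt (x, y) = ∑ p : X × Y, Pt p := (Fintype.sum_prod_type_right _).symm
      _ ≤ 1 := hPt1
  have reord : ∑ q : S × Z × Y, (hv q)^2 = ∑ y, ∑ s, ∑ z, (hv (s, z, y))^2 := by
    rw [Fintype.sum_prod_type]
    simp_rw [Fintype.sum_prod_type]
    rw [Finset.sum_congr rfl fun s _ => Finset.sum_comm, Finset.sum_comm]
  have hsum_h : ∑ q : S × Z × Y, (hv q)^2 ≤ nZ * (2:ℝ)^(-k) := by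
    rw [reord]
    calc (∑ y, ∑ s, ∑ z, (hv (s, z, y))^2)
        ≤ ∑ y, nZ * (2:ℝ)^(-k) * ∑ x, Pt (x, y) := Finset.sum_le_sum fun y _ => hy y
      _ = nZ * (2:ℝ)^(-k) * ∑ y, ∑ x, Pt (x, y) := by rw [Finset.mul_sum]
      _ ≤ nZ * (2:ℝ)^(-k) * 1 := by
          apply mul_le_mul_of_nonneg_left hmargsum (by positivity)
      _ = nZ * (2:ℝ)^(-k) := mul_one _
  -- conclude
  have hD : ∑ q : S × Z × Y, |P q - Q q| ≤ Real.sqrt (nZ * (2:ℝ)^(-k)) := by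
    rw [Real.le_sqrt (Finset.sum_nonneg fun q _ => abs_nonneg _) (by positivity)]
    calc (∑ q : S × Z × Y, |P q - Q q|)^2
        ≤ (∑ q, w q) * (∑ q, (hv q)^2) := hCS
      _ = ∑ q, (hv q)^2 := by rw [hw1, one_mul]
      _ ≤ nZ * (2:ℝ)^(-k) := hsum_h
  show Tv P Q ≤ (1/2) * Real.sqrt (nZ * (2:ℝ)^(-k))
  unfold Tv
  rw [hsumP, hsumQ, sub_self, abs_zero, mul_zero, add_zero]
  linarith
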